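/- If f*: V → W is linear and U is a maximally g-isotropic (Dirac) subspace of W ⊕ W*, then the pullback f⃖*U = {(X, f*η) : (f*X, η) ∈ U} is a maximally g-isotropic subspace of V ⊕ V*. -/

import Mathlib

open LinearMap

/-- The neutral metric `g((X,α),(Y,μ)) = (α(Y) + μ(X))/2` on `V ⊕ V*`. -/
noncomputable def neutralMetric (V : Type*) [AddCommGroup V] [Module ℝ V] :
    (V × Module.Dual ℝ V) → (V × Module.Dual ℝ V) → ℝ :=
  fun p q => (p.2 q.1 + q.2 p.1) / 2

/-- The pullback `f⃖*U = {(X, f*η) : (f*X, η) ∈ U}` of a subspace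
`U ⊆ W ⊕ W*` along a linear map `f : V → W`. -/
noncomputable def Pullback {V W : Type*} [AddCommGroup V] [Module ℝ V]
    [AddCommGroup W] [Module ℝ W] (f : V →ₗ[ℝ] W)
    (U : Submodule ℝ (W × Module.Dual ℝ W)) :
    Submodule ℝ (V × Module.Dual ℝ V) :=
  Submodule.map (LinearMap.prodMap LinearMap.id f.dualMap)
    (Submodule.comap (LinearMap.prodMap f LinearMap.id) U)

/-- The bilinear form `B((X,α),(Y,μ)) = α(Y) + μ(X)` (twice the neutral metric). -/
noncomputable def Bform (W : Type*) [AddCommGroup W] [Module ℝ W] :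
    LinearMap.BilinForm ℝ (W × Module.Dual ℝ W) :=
  LinearMap.mk₂ ℝ (fun p q => p.2 q.1 + q.2 p.1)
    (fun m₁ m₂ n => by simp; ring)
    (fun c m n => by simp; ring)
    (fun m n₁ n₂ => by simp; ring)
    (fun c m n => by simp; ring)

lemma Bform_apply {W : Type*} [AddCommGroup W] [Module ℝ W]
    (p q : W × Module.Dual ℝ W) : Bform W p q = p.2 q.1 + q.2 p.1 := rfl

lemma Bform_isRefl {W : Type*} [AddCommGroup W] [Module ℝ W] :
    (Bform W).IsRefl := by
  intro p q h
  rw [Bform_apply] at h ⊢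
  linarith

lemma Bform_nondeg {W : Type*} [AddCommGroup W] [Module ℝ W] [FiniteDimensional ℝ W] :
    (Bform W).Nondegenerate := by
  refine (LinearMap.IsRefl.nondegenerate_iff_separatingLeft (B := Bform W)
    (fun p q h => by rw [Bform_apply] at h ⊢; linarith)).mpr ?_
  intro p hp
  have h1 : p.2 = 0 := by
    ext y
    simpa [Bform_apply] using hp (y, 0)
  have h2 : p.1 = 0 := by
    rw [← Module.forall_dual_apply_eq_zero_iff ℝ]
    intro φ
    simpa [Bform_apply, h1] using hp (0, φ)
  exact Prod.ext h2 h1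

/-- Rank–nullity for the image of a submodule. -/
lemma finrank_map_add_finrank_inf_ker {M N : Type*} [AddCommGroup M] [Module ℝ M]
    [AddCommGroup N] [Module ℝ N] [FiniteDimensional ℝ M]
    (g : M →ₗ[ℝ] N) (p : Submodule ℝ M) :
    Module.finrank ℝ (p.map g) +
      Module.finrank ℝ ((p ⊓ LinearMap.ker g : Submodule ℝ M)) = Module.finrank ℝ p := by
  have h := LinearMap.finrank_range_add_finrank_ker (g.comp p.subtype)
  rw [LinearMap.range_comp, Submodule.range_subtype, LinearMap.ker_comp,
    ← Submodule.finrank_map_subtype_eq p (Submodule.comap p.subtype (LinearMap.ker g)),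
    Submodule.map_comap_subtype] at h
  exact h

lemma finrank_prod_bot {M N : Type*} [AddCommGroup M] [Module ℝ M]
    [AddCommGroup N] [Module ℝ N] (p : Submodule ℝ M) :
    Module.finrank ℝ (Submodule.prod p (⊥ : Submodule ℝ N)) = Module.finrank ℝ p := by
  rw [← Submodule.map_inl]
  exact (LinearEquiv.finrank_eq (Submodule.equivMapOfInjective _ LinearMap.inl_injective p)).symm

lemma finrank_bot_prod {M N : Type*} [AddCommGroup M] [Module ℝ M]
    [AddCommGroup N] [Module ℝ N] (q : Submodule ℝ N) :
    Module.finrank ℝ (Submodule.prod (⊥ : Submodule ℝ M) q) = Module.finrank ℝ q := by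
  rw [← Submodule.map_inr]
  exact (LinearEquiv.finrank_eq (Submodule.equivMapOfInjective _ LinearMap.inr_injective q)).symm

set_option maxHeartbeats 1000000 in
/-- The pullback of a maximally `g`-isotropic (Dirac) subspace of `W ⊕ W*`
along a linear map `f : V → W` is a maximally `g`-isotropic subspace of
`V ⊕ V*`. -/
theorem pullback_dirac
    (V W : Type*) [AddCommGroup V] [Module ℝ V] [FiniteDimensional ℝ V]
    [AddCommGroup W] [Module ℝ W] [FiniteDimensional ℝ W]
    (f : V →ₗ[ℝ] W) (U : Submodule ℝ (W × Module.Dual ℝ W))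
    (hiso : ∀ p ∈ U, ∀ q ∈ U, neutralMetric W p q = 0)
    (hmax : Module.finrank ℝ U = Module.finrank ℝ W) :
    (∀ p ∈ Pullback f U, ∀ q ∈ Pullback f U, neutralMetric V p q = 0) ∧
    Module.finrank ℝ (Pullback f U) = Module.finrank ℝ V := by
  classical
  set B : LinearMap.BilinForm ℝ (W × Module.Dual ℝ W) := Bform W with hBdef
  set F : (V × Module.Dual ℝ W) →ₗ[ℝ] (W × Module.Dual ℝ W) :=
    LinearMap.prodMap f LinearMap.id with hFdef
  set G : (V × Module.Dual ℝ W) →ₗ[ℝ] (V × Module.Dual ℝ V) :=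
    LinearMap.prodMap LinearMap.id f.dualMap with hGdef
  set K : Submodule ℝ (V × Module.Dual ℝ W) := Submodule.comap F U with hKdef
  set S : Submodule ℝ (W × Module.Dual ℝ W) :=
    Submodule.prod (LinearMap.range f) (⊤ : Submodule ℝ (Module.Dual ℝ W)) with hSdef
  set Ann : Submodule ℝ (Module.Dual ℝ W) := (LinearMap.range f).dualAnnihilator with hAnndef
  set T : Submodule ℝ (Module.Dual ℝ W) :=
    (Submodule.comap (LinearMap.inr ℝ W (Module.Dual ℝ W)) U) ⊓ Ann with hTdef
  have hPull : Pullback f U = Submodule.map G K := rfl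
  -- isotropy
  have hisoP : ∀ p ∈ Pullback f U, ∀ q ∈ Pullback f U, neutralMetric V p q = 0 := by
    rintro p hp q hq
    rw [hPull] at hp hq
    obtain ⟨⟨x, η⟩, hxη, rfl⟩ := hp
    obtain ⟨⟨y, μ⟩, hyμ, rfl⟩ := hq
    have h := hiso _ hxη _ hyμ
    simp only [neutralMetric, hGdef, hFdef, LinearMap.prodMap_apply, LinearMap.id_coe,
      id_eq, LinearMap.dualMap_apply] at h ⊢
    linarith
  refine ⟨hisoP, ?_⟩
  -- notation for dimensions
  set m := Module.finrank ℝ W with hm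
  set n := Module.finrank ℝ V with hn
  have hDW2 : Module.finrank ℝ (W × Module.Dual ℝ W) = m + m := by
    rw [Module.finrank_prod, Subspace.dual_finrank_eq]
  -- U is self-orthogonal
  have hUle : U ≤ B.orthogonal U := by
    intro q hq
    rw [LinearMap.BilinForm.mem_orthogonal_iff]
    intro p hp
    have h := hiso p hp q hq
    simp only [neutralMetric] at h
    rw [hBdef, Bform_apply]
    linarith
  have hUorthrank : Module.finrank ℝ (B.orthogonal U) = m := by
    rw [LinearMap.BilinForm.finrank_orthogonal Bform_nondeg, hDW2, hmax]
    omega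
  have hUorth : U = B.orthogonal U :=
    Submodule.eq_of_le_of_finrank_le hUle (by rw [hUorthrank, hmax])
  -- orthogonal of S
  have hSorth : B.orthogonal S = Submodule.prod (⊥ : Submodule ℝ W) Ann := by
    ext ⟨y, μ⟩
    rw [LinearMap.BilinForm.mem_orthogonal_iff, Submodule.mem_prod]
    constructor
    · intro h
      have hy : y = 0 := by
        rw [← Module.forall_dual_apply_eq_zero_iff ℝ]
        intro φ
        have hmem : ((0 : W), φ) ∈ S := Submodule.mem_prod.mpr ⟨Submodule.zero_mem _, trivial⟩
        have := h (0, φ) hmem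
        rw [hBdef, Bform_apply] at this
        simpa using this
      refine ⟨by simpa using hy, ?_⟩
      show μ ∈ Ann
      rw [hAnndef, Submodule.mem_dualAnnihilator]
      intro x hx
      have hmem : (x, (0 : Module.Dual ℝ W)) ∈ S := Submodule.mem_prod.mpr ⟨hx, trivial⟩
      have := h (x, 0) hmem
      rw [hBdef, Bform_apply] at this
      simpa using this
    · rintro ⟨hy, hμ⟩
      have hy0 : y = 0 := by simpa using hy
      have hμ' : ∀ x ∈ LinearMap.range f, μ x = 0 := by
        have : μ ∈ Ann := hμ
        rw [hAnndef, Submodule.mem_dualAnnihilator] at this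
        exact this
      rintro ⟨x, α⟩ hxα
      obtain ⟨hx, -⟩ := Submodule.mem_prod.mp hxα
      rw [hBdef, Bform_apply]
      simp [hy0, hμ' x hx]
  -- orthogonal of a sup
  have hsup : B.orthogonal (U ⊔ S) = B.orthogonal U ⊓ B.orthogonal S := by
    ext z
    simp only [Submodule.mem_inf, LinearMap.BilinForm.mem_orthogonal_iff]
    constructor
    · intro h
      exact ⟨fun p hp => h p (Submodule.mem_sup_left hp),
        fun p hp => h p (Submodule.mem_sup_right hp)⟩
    · rintro ⟨h1, h2⟩ p hp
      rcases Submodule.mem_sup.mp hp with ⟨u, hu, s, hs, rfl⟩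
      have e1 := h1 u hu
      have e2 := h2 s hs
      rw [map_add, LinearMap.add_apply, e1, e2, add_zero]
  -- U ⊓ orth S = ⊥ × T
  have hUinf : U ⊓ Submodule.prod (⊥ : Submodule ℝ W) Ann
      = Submodule.prod (⊥ : Submodule ℝ W) T := by
    ext ⟨y, μ⟩
    rw [Submodule.mem_inf, Submodule.mem_prod, Submodule.mem_prod]
    constructor
    · rintro ⟨hU, hy, hμ⟩
      have hy0 : y = 0 := by simpa using hy
      subst hy0
      exact ⟨hy, Submodule.mem_inf.mpr ⟨hU, hμ⟩⟩
    · rintro ⟨hy, hT⟩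
      have hy0 : y = 0 := by simpa using hy
      subst hy0
      obtain ⟨hU, hμ⟩ := Submodule.mem_inf.mp hT
      exact ⟨hU, hy, hμ⟩
  -- ker G = ⊥ × Ann
  have hkerG : LinearMap.ker G = Submodule.prod (⊥ : Submodule ℝ V) Ann := by
    rw [hGdef, LinearMap.ker_prodMap, LinearMap.ker_id,
      ker_dualMap_eq_dualAnnihilator_range, hAnndef]
  -- K ⊓ ker G = ⊥ × T
  have hKG : K ⊓ LinearMap.ker G = Submodule.prod (⊥ : Submodule ℝ V) T := by
    ext ⟨x, η⟩
    rw [Submodule.mem_inf, hkerG, Submodule.mem_prod, Submodule.mem_prod]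
    constructor
    · rintro ⟨hK, hx, hη⟩
      have hx0 : x = 0 := by simpa using hx
      subst hx0
      refine ⟨hx, Submodule.mem_inf.mpr ⟨?_, hη⟩⟩
      have hF0 : F ((0 : V), η) = ((0 : W), η) := by
        simp [hFdef, LinearMap.prodMap_apply]
      have hU : F ((0 : V), η) ∈ U := hK
      rw [hF0] at hU
      exact hU
    · rintro ⟨hx, hT⟩
      have hx0 : x = 0 := by simpa using hx
      subst hx0
      obtain ⟨hU, hη⟩ := Submodule.mem_inf.mp hT
      refine ⟨?_, hx, hη⟩
      show F ((0 : V), η) ∈ U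
      have hF0 : F ((0 : V), η) = ((0 : W), η) := by
        simp [hFdef, LinearMap.prodMap_apply]
      rw [hF0]
      exact hU
  -- range F = S
  have hrangeF : LinearMap.range F = S := by
    apply le_antisymm
    · rintro ⟨y, μ⟩ ⟨⟨x, η⟩, h⟩
      rw [← h]
      exact Submodule.mem_prod.mpr ⟨⟨x, rfl⟩, trivial⟩
    · rintro ⟨y, μ⟩ hyμ
      obtain ⟨hy, -⟩ := Submodule.mem_prod.mp hyμ
      obtain ⟨x, rfl⟩ := hy
      exact ⟨(x, μ), rfl⟩
  -- ker F
  have hkerF : LinearMap.ker F =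
      Submodule.prod (LinearMap.ker f) (⊥ : Submodule ℝ (Module.Dual ℝ W)) := by
    rw [hFdef, LinearMap.ker_prodMap, LinearMap.ker_id]
  -- dimension bookkeeping
  set a := Module.finrank ℝ T with ha
  set k := Module.finrank ℝ (LinearMap.ker f) with hk
  have hSrank : Module.finrank ℝ S + k = n + m := by
    have h := LinearMap.finrank_range_add_finrank_ker F
    rw [hrangeF, hkerF, finrank_prod_bot, Module.finrank_prod, Subspace.dual_finrank_eq] at h
    omega
  have hsupinf : Module.finrank ℝ ((U ⊔ S : Submodule ℝ (W × Module.Dual ℝ W)))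
      + Module.finrank ℝ ((U ⊓ S : Submodule ℝ (W × Module.Dual ℝ W)))
      = m + Module.finrank ℝ S := by
    rw [← hmax]
    exact Submodule.finrank_sup_add_finrank_inf_eq U S
  have hsuporthrank :
      Module.finrank ℝ ((U ⊔ S : Submodule ℝ (W × Module.Dual ℝ W))) + a = m + m := by
    have h := LinearMap.BilinForm.finrank_orthogonal (B := B) Bform_nondeg (U ⊔ S)
    rw [hsup, ← hUorth, hSorth, hUinf, hDW2, finrank_bot_prod] at h
    have hle : Module.finrank ℝ ((U ⊔ S : Submodule ℝ (W × Module.Dual ℝ W))) ≤ m + m := by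
      rw [← hDW2]; exact Submodule.finrank_le _
    omega
  -- rank-nullity for K under F and G
  have hmapFK : Submodule.map F K = U ⊓ S := by
    rw [hKdef, Submodule.map_comap_eq, hrangeF, inf_comm]
  have hkerFK : K ⊓ LinearMap.ker F = LinearMap.ker F := by
    rw [inf_eq_right]
    intro x hx
    show F x ∈ U
    rw [LinearMap.mem_ker.mp hx]
    exact U.zero_mem
  have hKrank : Module.finrank ℝ ((U ⊓ S : Submodule ℝ (W × Module.Dual ℝ W))) + k
      = Module.finrank ℝ K := by
    have h := finrank_map_add_finrank_inf_ker F K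
    rw [hmapFK, hkerFK, hkerF, finrank_prod_bot] at h
    omega
  have hPrank : Module.finrank ℝ (Pullback f U) + a = Module.finrank ℝ K := by
    have h := finrank_map_add_finrank_inf_ker G K
    rw [← hPull, hKG, finrank_bot_prod] at h
    exact h
  omega
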